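/- For any matroid M, the combinatorial derived matroid δM is simple: no set A ⊆ 𝒞 with |A| = 1 or |A| = 2 belongs to the collection 𝒜 of dependent sets of δM. -/

import Mathlib

open Set

namespace DM

variable {α : Type*}

/-- A circuit of a matroid: an inclusion-minimal dependent set. -/
def IsCircuit (M : Matroid α) (C : Set α) : Prop :=
  M.Dep C ∧ ∀ D, M.Dep D → D ⊆ C → D = C

/-- The collection 𝒞 of circuits of `M`. -/
def circuits (M : Matroid α) : Set (Set α) := {C | IsCircuit M C}

/-- The rank of a set: the maximal cardinality of an independent subset. -/
noncomputable def rk (M : Matroid α) (S : Set α) : ℕ :=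
  sSup {m : ℕ | ∃ I, I ⊆ S ∧ M.Indep I ∧ I.ncard = m}

/-- The nullity function n(S) = |S| - r(S). -/
noncomputable def nullity (M : Matroid α) (S : Set α) : ℕ := S.ncard - rk M S

/-- The support of a family of sets. -/
def supp (A : Set (Set α)) : Set α := ⋃₀ A

/-- The initial collection 𝒜₀ = {A ⊆ 𝒞 : |A| > n(supp A)}. -/
noncomputable def A0 (M : Matroid α) : Set (Set (Set α)) :=
  {A | A ⊆ circuits M ∧ nullity M (supp A) < A.ncard}

/-- The operation ε. -/
def eps (X : Set (Set (Set α))) : Set (Set (Set α)) :=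
  X ∪ {B | ∃ A₁ ∈ X, ∃ A₂ ∈ X, A₁ ∩ A₂ ∉ X ∧ ∃ C ∈ A₁ ∩ A₂, B = (A₁ ∪ A₂) \ {C}}

/-- The up-closure ↑X = {A ⊆ 𝒞 : ∃ A' ∈ X, A' ⊆ A} within the ground collection 𝒞. -/
def up (𝒞 : Set (Set α)) (X : Set (Set (Set α))) : Set (Set (Set α)) :=
  {A | A ⊆ 𝒞 ∧ ∃ A' ∈ X, A' ⊆ A}

/-- The increasing sequence 𝒜ᵢ with 𝒜₍ᵢ₊₁₎ = ↑ε(𝒜ᵢ). -/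
noncomputable def Ai (M : Matroid α) : ℕ → Set (Set (Set α))
  | 0 => A0 M
  | (i+1) => up (circuits M) (eps (Ai M i))

/-- 𝒜 = ⋃ᵢ 𝒜ᵢ : the collection of dependent sets of the combinatorial derived matroid δM. -/
noncomputable def derivedDep (M : Matroid α) : Set (Set (Set α)) := ⋃ i, Ai M i

/- ### Auxiliary lemmas -/

lemma circuits_finite {M : Matroid α} (hE : M.E.Finite) : (circuits M).Finite :=
  hE.finite_subsets.subset fun _ hC => hC.1.subset_ground

lemma indep_of_ssubset_circuit {M : Matroid α} {C D : Set α} (hC : IsCircuit M C)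
    (hD : D ⊂ C) : M.Indep D := by
  by_contra h
  have hdep : M.Dep D := ⟨h, hD.subset.trans hC.1.subset_ground⟩
  exact hD.ne (hC.2 D hdep hD.subset)

lemma rk_le {M : Matroid α} {S : Set α} {k : ℕ}
    (h : ∀ I, I ⊆ S → M.Indep I → I.ncard ≤ k) : rk M S ≤ k := by
  refine csSup_le ⟨0, ∅, empty_subset _, M.empty_indep, by simp⟩ ?_
  rintro m ⟨I, hIS, hind, rfl⟩
  exact h I hIS hind

/-- Circuit elimination fact: if `C₁ ≠ C₂` are circuits and `x ∈ C₁ ∩ C₂`, then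
`(C₁ ∪ C₂) \ {x}` is dependent. -/
lemma not_indep_union_diff {M : Matroid α} (hE : M.E.Finite) {C₁ C₂ : Set α} {x : α}
    (h₁ : IsCircuit M C₁) (h₂ : IsCircuit M C₂) (hne : C₁ ≠ C₂)
    (hx₁ : x ∈ C₁) (hx₂ : x ∈ C₂) : ¬ M.Indep ((C₁ ∪ C₂) \ {x}) := by
  intro hI
  have hCE : C₁ ∪ C₂ ⊆ M.E := union_subset h₁.1.subset_ground h₂.1.subset_ground
  have hfin : (C₁ ∪ C₂).Finite := hE.subset hCE
  obtain ⟨e, heC₂, heC₁⟩ : ∃ e, e ∈ C₂ ∧ e ∉ C₁ := by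
    by_contra h
    push_neg at h
    exact hne ((h₁.2 C₂ h₂.1 h).symm)
  have hC2e : M.Indep (C₂ \ {e}) :=
    indep_of_ssubset_circuit h₂ (diff_singleton_ssubset.mpr heC₂)
  obtain ⟨B, hB, hsub⟩ := hC2e.subset_isBasis_of_subset
    ((diff_subset.trans subset_union_right) : C₂ \ {e} ⊆ C₁ ∪ C₂) hCE
  have heB : e ∉ B := by
    intro heB
    refine h₂.1.not_indep (hB.indep.subset fun z hz => ?_)
    by_cases hze : z = e
    · exact hze ▸ heB
    · exact hsub ⟨hz, hze⟩
  obtain ⟨f, hfC₁, hfB⟩ : ∃ f, f ∈ C₁ ∧ f ∉ B := by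
    by_contra h
    push_neg at h
    exact h₁.1.not_indep (hB.indep.subset h)
  have hfe : f ≠ e := fun h => heC₁ (h ▸ hfC₁)
  have hBsub : B ⊆ (C₁ ∪ C₂) \ {e, f} := fun z hz =>
    ⟨hB.subset hz, by rintro (rfl | rfl) <;> [exact heB hz; exact hfB hz]⟩
  have hefU : ({e, f} : Set α) ⊆ C₁ ∪ C₂ :=
    insert_subset (Or.inr heC₂) (singleton_subset_iff.mpr (Or.inl hfC₁))
  have hxe : x ≠ e := fun h => heC₁ (h ▸ hx₁)
  have hU2 : 2 ≤ (C₁ ∪ C₂).ncard := by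
    calc 2 = ({x, e} : Set α).ncard := (ncard_pair hxe).symm
    _ ≤ (C₁ ∪ C₂).ncard :=
        ncard_le_ncard (insert_subset (Or.inl hx₁) (singleton_subset_iff.mpr (Or.inr heC₂))) hfin
  have hBcard : B.ncard ≤ (C₁ ∪ C₂).ncard - 2 := by
    have := ncard_le_ncard hBsub hfin.diff
    rwa [ncard_diff hefU (hE.subset (hefU.trans hCE)), ncard_pair hfe.symm] at this
  have hIcard : ((C₁ ∪ C₂) \ {x}).ncard = (C₁ ∪ C₂).ncard - 1 :=
    ncard_diff_singleton_of_mem (Or.inl hx₁)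
  have hlt : B.encard < ((C₁ ∪ C₂) \ {x}).encard := by
    rw [← (hfin.subset hB.subset).cast_ncard_eq, ← hfin.diff.cast_ncard_eq]
    exact_mod_cast lt_of_le_of_lt hBcard (by omega)
  obtain ⟨z, hz, hzind⟩ := hB.indep.augment hI hlt
  have : B = insert z B :=
    hB.eq_of_subset_indep hzind (subset_insert z B)
      (insert_subset (diff_subset hz.1) hB.subset)
  exact hz.2 (this ▸ mem_insert z B)

lemma nullity_circuit_ge_one {M : Matroid α} (hE : M.E.Finite) {C : Set α}
    (hC : IsCircuit M C) : 1 ≤ nullity M C := by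
  have hfin : C.Finite := hE.subset hC.1.subset_ground
  have hne : C.Nonempty := by
    rcases C.eq_empty_or_nonempty with rfl | h
    · exact absurd M.empty_indep hC.1.not_indep
    · exact h
  have hC1 : 1 ≤ C.ncard := (ncard_pos hfin).mpr hne
  have hrk : rk M C ≤ C.ncard - 1 := by
    apply rk_le
    intro I hIS hind
    have hss : I ⊂ C := hIS.ssubset_of_ne (fun h => hC.1.not_indep (h ▸ hind))
    have := ncard_lt_ncard hss hfin
    omega
  unfold nullity
  omega

lemma nullity_two_circuits {M : Matroid α} (hE : M.E.Finite) {C₁ C₂ : Set α}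
    (h₁ : IsCircuit M C₁) (h₂ : IsCircuit M C₂) (hne : C₁ ≠ C₂) :
    2 ≤ nullity M (C₁ ∪ C₂) := by
  have hCE : C₁ ∪ C₂ ⊆ M.E := union_subset h₁.1.subset_ground h₂.1.subset_ground
  have hfin : (C₁ ∪ C₂).Finite := hE.subset hCE
  obtain ⟨e, heC₂, heC₁⟩ : ∃ e, e ∈ C₂ ∧ e ∉ C₁ := by
    by_contra h
    push_neg at h
    exact hne ((h₁.2 C₂ h₂.1 h).symm)
  have hne₁ : C₁.Nonempty := by
    rcases C₁.eq_empty_or_nonempty with rfl | h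
    · exact absurd M.empty_indep h₁.1.not_indep
    · exact h
  obtain ⟨a, ha⟩ := hne₁
  have hU2 : 2 ≤ (C₁ ∪ C₂).ncard := by
    have hea : e ≠ a := fun h => heC₁ (h ▸ ha)
    calc 2 = ({e, a} : Set α).ncard := (ncard_pair hea).symm
    _ ≤ (C₁ ∪ C₂).ncard :=
        ncard_le_ncard (insert_subset (Or.inr heC₂) (singleton_subset_iff.mpr (Or.inl ha))) hfin
  have hrk : rk M (C₁ ∪ C₂) ≤ (C₁ ∪ C₂).ncard - 2 := by
    apply rk_le
    intro I hIS hind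
    set D := (C₁ ∪ C₂) \ I with hD
    have hIfin : I.Finite := hfin.subset hIS
    have hDcard : D.ncard = (C₁ ∪ C₂).ncard - I.ncard := ncard_diff hIS hIfin
    have hIcard : I.ncard ≤ (C₁ ∪ C₂).ncard := ncard_le_ncard hIS hfin
    obtain ⟨x, hxC₁, hxI⟩ : ∃ x, x ∈ C₁ ∧ x ∉ I := by
      by_contra h
      push_neg at h
      exact h₁.1.not_indep (hind.subset h)
    obtain ⟨y, hyC₂, hyI⟩ : ∃ y, y ∈ C₂ ∧ y ∉ I := by
      by_contra h
      push_neg at h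
      exact h₂.1.not_indep (hind.subset h)
    have hxD : x ∈ D := ⟨Or.inl hxC₁, hxI⟩
    have hyD : y ∈ D := ⟨Or.inr hyC₂, hyI⟩
    have hD2 : 2 ≤ D.ncard := by
      by_contra h
      push_neg at h
      have hDfin : D.Finite := hfin.diff
      rcases (ncard_le_one_iff_eq hDfin).mp (by omega) with h0 | ⟨z, hz⟩
      · rw [h0] at hxD; exact hxD
      · have hxz : x = z := by have := hz ▸ hxD; simpa using this
        have hyz : y = z := by have := hz ▸ hyD; simpa using this
        have hIeq : (C₁ ∪ C₂) \ {z} ⊆ I := fun w hw => by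
          by_contra hwI
          have : w ∈ D := ⟨hw.1, hwI⟩
          exact hw.2 (hz ▸ this)
        exact not_indep_union_diff hE h₁ h₂ hne (hxz ▸ hxC₁) (hyz ▸ hyC₂)
          (hind.subset hIeq)
    omega
  unfold nullity
  omega

/-- The key invariant: every member of `Ai M i` has at least 3 elements. -/
lemma three_le_ncard_of_mem_Ai {M : Matroid α} (hE : M.E.Finite) :
    ∀ i (A : Set (Set α)), A ∈ Ai M i → A ⊆ circuits M ∧ 3 ≤ A.ncard := by
  intro i
  induction i with
  | zero =>
    rintro A ⟨hAc, hn⟩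
    refine ⟨hAc, ?_⟩
    have hAfin : A.Finite := (circuits_finite hE).subset hAc
    by_contra h
    push_neg at h
    interval_cases hcard : A.ncard
    · omega
    · obtain ⟨C, rfl⟩ := ncard_eq_one.mp hcard
      have hC : IsCircuit M C := hAc rfl
      have : supp {C} = C := sUnion_singleton C
      rw [this] at hn
      have := nullity_circuit_ge_one hE hC
      omega
    · obtain ⟨C₁, C₂, hne, rfl⟩ := ncard_eq_two.mp hcard
      have hC₁ : IsCircuit M C₁ := hAc (Or.inl rfl)
      have hC₂ : IsCircuit M C₂ := hAc (Or.inr rfl)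
      have : supp {C₁, C₂} = C₁ ∪ C₂ := sUnion_pair C₁ C₂
      rw [this] at hn
      have := nullity_two_circuits hE hC₁ hC₂ hne
      omega
  | succ i ih =>
    rintro A ⟨hAc, A', hA', hsub⟩
    refine ⟨hAc, ?_⟩
    have hAfin : A.Finite := (circuits_finite hE).subset hAc
    have hA'3 : 3 ≤ A'.ncard := by
      rcases hA' with hA' | ⟨A₁, h₁, A₂, h₂, hint, C, hC, rfl⟩
      · exact (ih A' hA').2
      · have h₁' := ih A₁ h₁
        have h₂' := ih A₂ h₂
        have hne : A₁ ≠ A₂ := by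
          rintro rfl
          exact hint (by simpa using h₁)
      -- |A₁ ∪ A₂| ≥ 4
        have hUfin : (A₁ ∪ A₂).Finite :=
          ((circuits_finite hE).subset h₁'.1).union ((circuits_finite hE).subset h₂'.1)
        have hU4 : 4 ≤ (A₁ ∪ A₂).ncard := by
          by_cases hss : A₁ ⊆ A₂
          · have : A₁ ⊂ A₂ := hss.ssubset_of_ne hne
            have h1 := ncard_lt_ncard this ((circuits_finite hE).subset h₂'.1)
            have h2 := ncard_le_ncard (subset_union_right (s := A₁) (t := A₂)) hUfin
            omega
          · obtain ⟨z, hzA₁, hzA₂⟩ := not_subset.mp hss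
            have h1 : insert z A₂ ⊆ A₁ ∪ A₂ :=
              insert_subset (Or.inl hzA₁) subset_union_right
            have h2 := ncard_le_ncard h1 hUfin
            rw [ncard_insert_of_notMem hzA₂ ((circuits_finite hE).subset h₂'.1)] at h2
            omega
        have := ncard_diff_singleton_of_mem (show C ∈ A₁ ∪ A₂ from Or.inl hC.1)
        omega
    exact le_trans hA'3 (ncard_le_ncard hsub hAfin)

/-- δM is simple: no subset of 𝒞 of cardinality 1 or 2 is dependent. -/
theorem derived_simple (M : Matroid α) (hE : M.E.Finite)
    (A : Set (Set α)) (hA : A ⊆ circuits M)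
    (hcard : A.ncard = 1 ∨ A.ncard = 2) :
    A ∉ derivedDep M := by
  intro h
  obtain ⟨i, hi⟩ := mem_iUnion.mp h
  have := (three_le_ncard_of_mem_Ai hE i A hi).2
  omega

end DM
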